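/- arXiv:0812.5101 — 3 statements merged into one kernel-verified Lean document; each statement's English description precedes it below -/
import Mathlib

section
/- Every 4-regular multigraph admits a 2-cycle-coloring: its edges can be partitioned into two classes, each of which is a disjoint union of cycles (i.e., each class forms a 2-regular spanning subgraph). -/
open Finset

open Finset Equiv Equiv.Perm

lemma twoInvColor {X : Type*} [Fintype X] [DecidableEq X] (a b : X → X)
    (ha : ∀ x, a (a x) = x) (hb : ∀ x, b (b x) = x)
    (hfa : ∀ x, a x ≠ x) (hfb : ∀ x, b x ≠ x) :
    ∃ f : X → Bool, ∀ x, f (a x) ≠ f x ∧ f (b x) ≠ f x := by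
  classical
  set A : Equiv.Perm X := Function.Involutive.toPerm a ha with hA
  set B : Equiv.Perm X := Function.Involutive.toPerm b hb with hB
  set π : Equiv.Perm X := B * A with hπ
  have hAx : ∀ x, A x = a x := fun _ => rfl
  have hBx : ∀ x, B x = b x := fun _ => rfl
  have hAA : A * A = 1 := by ext x; simp [hAx, ha]
  have hBB : B * B = 1 := by ext x; simp [hBx, hb]
  have hAinv : A⁻¹ = A := inv_eq_of_mul_eq_one_left hAA
  have hBinv : B⁻¹ = B := inv_eq_of_mul_eq_one_left hBB
  have hsemi : SemiconjBy A π π⁻¹ := by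
    unfold SemiconjBy
    have hinv : π⁻¹ = A * B := by rw [hπ, mul_inv_rev, hAinv, hBinv]
    rw [hinv, hπ, mul_assoc]
  have hconj : ∀ (k : ℤ), A * π ^ k = π ^ (-k) * A := by
    intro k
    have := hsemi.zpow_right k
    unfold SemiconjBy at this
    rw [this, inv_zpow, zpow_neg]
  -- no orbit is a-stable
  have hstab : ∀ x, ¬ π.SameCycle x (a x) := by
    intro x ⟨k, hk⟩
    have key : ∀ j : ℤ, (π ^ (k - 2*j)) x ≠ x ∧ (π ^ (k + 1 - 2*j)) x ≠ x := by
      intro j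
      have haj : a ((π ^ j) x) = (π ^ (k - j)) x := by
        rw [← hAx]
        have : A ((π ^ j) x) = (A * π ^ j) x := rfl
        rw [this, hconj j]
        have : (π ^ (-j) * A) x = (π ^ (-j)) (A x) := rfl
        rw [this, hAx, ← hk]
        have : (π ^ (-j)) ((π ^ k) x) = (π ^ (-j) * π ^ k) x := rfl
        rw [this, ← zpow_add]
        congr 1; ring
      have hbj : b ((π ^ j) x) = (π ^ (k + 1 - j)) x := by
        have : b ((π ^ j) x) = π (a ((π ^ j) x)) := by
          rw [hπ]
          simp only [Equiv.Perm.mul_apply, hAx, hBx, ha]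
        rw [this, haj]
        have : π ((π ^ (k - j)) x) = (π ^ (1:ℤ) * π ^ (k - j)) x := by
          simp [Equiv.Perm.mul_apply]
        rw [this, ← zpow_add]
        congr 1; ring
      constructor
      · intro h
        apply hfa ((π ^ j) x)
        rw [haj]
        have : (π ^ (k - j)) x = (π ^ j) ((π ^ (k - 2*j)) x) := by
          have : (π ^ j) ((π ^ (k - 2*j)) x) = (π ^ j * π ^ (k - 2*j)) x := rfl
          rw [this, ← zpow_add]; congr 1; ring
        rw [this, h]
      · intro h
        apply hfb ((π ^ j) x)
        rw [hbj]
        have : (π ^ (k + 1 - j)) x = (π ^ j) ((π ^ (k + 1 - 2*j)) x) := by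
          have : (π ^ j) ((π ^ (k + 1 - 2*j)) x) = (π ^ j * π ^ (k + 1 - 2*j)) x := rfl
          rw [this, ← zpow_add]; congr 1; ring
        rw [this, h]
    rcases Int.even_or_odd k with ⟨m, hm⟩ | ⟨m, hm⟩
    · have := (key m).1
      apply this
      have : k - 2*m = 0 := by omega
      rw [this, zpow_zero]; rfl
    · have := (key (m+1)).2
      apply this
      have : k + 1 - 2*(m+1) = 0 := by omega
      rw [this, zpow_zero]; rfl
  -- key function
  let enc : X → ℕ := fun x => (Fintype.equivFin X x : ℕ)
  have hencinj : Function.Injective enc := by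
    intro x y h
    exact (Fintype.equivFin X).injective (Fin.val_injective h)
  have hne : ∀ x : X, ((univ.filter (fun y => π.SameCycle x y)).image enc).Nonempty := by
    intro x
    exact ⟨enc x, Finset.mem_image_of_mem enc (by simp [Equiv.Perm.SameCycle.refl])⟩
  let key : X → ℕ := fun x => ((univ.filter (fun y => π.SameCycle x y)).image enc).min' (hne x)
  have keyEq : ∀ x y, π.SameCycle x y → key x = key y := by
    intro x y h
    have : (univ.filter (fun z => π.SameCycle x z)) = (univ.filter (fun z => π.SameCycle y z)) := by
      ext z
      simp only [Finset.mem_filter, Finset.mem_univ, true_and]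
      exact ⟨fun hx => h.symm.trans hx, fun hy => h.trans hy⟩
    simp only [key, this]
  have keyInj : ∀ x y, key x = key y → π.SameCycle x y := by
    intro x y h
    have h1 := Finset.min'_mem _ (hne x)
    have h2 := Finset.min'_mem _ (hne y)
    rw [Finset.mem_image] at h1 h2
    obtain ⟨z1, hz1, hz1'⟩ := h1
    obtain ⟨z2, hz2, hz2'⟩ := h2
    rw [Finset.mem_filter] at hz1 hz2
    have : z1 = z2 := hencinj (hz1'.trans (h.trans hz2'.symm))
    exact hz1.2.trans (this ▸ hz2.2.symm)
  have keyNe : ∀ x, key x ≠ key (a x) := fun x h => hstab x (keyInj _ _ h)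
  refine ⟨fun x => decide (key x < key (a x)), fun x => ?_⟩
  constructor
  · show decide (key (a x) < key (a (a x))) ≠ decide (key x < key (a x))
    rw [ha]
    have := keyNe x
    simp only [ne_eq, decide_eq_decide]
    omega
  · show decide (key (b x) < key (a (b x))) ≠ decide (key x < key (a x))
    have h1 : key (b x) = key (a x) := by
      refine (keyEq (a x) (b x) ?_).symm
      refine ⟨1, ?_⟩
      simp only [zpow_one, hπ, Equiv.Perm.mul_apply, hAx, hBx, ha]
    have h2 : key (a (b x)) = key x := by
      refine (keyEq x (a (b x)) ?_).symm
      refine ⟨-1, ?_⟩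
      simp only [zpow_neg, zpow_one, hπ, mul_inv_rev, hAinv, hBinv,
        Equiv.Perm.mul_apply, hAx, hBx, hb]
    rw [h1, h2]
    have := keyNe x
    simp only [ne_eq, decide_eq_decide]
    omega

open Finset

lemma pairInv {E V : Type*} [Fintype E] [DecidableEq E] [DecidableEq V] (g : E → V)
    (h2 : ∀ e, (univ.filter (fun x => g x = g e)).card = 2) :
    ∃ t : E → E, ∀ e, g (t e) = g e ∧ t (t e) = e ∧ t e ≠ e := by
  classical
  have h1 : ∀ e : E, ∃ a, ((univ.filter (fun x => g x = g e)).erase e) = {a} := by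
    intro e
    apply Finset.card_eq_one.mp
    rw [Finset.card_erase_of_mem (by simp), h2]
  choose t htp using h1
  have hmem : ∀ e, t e ∈ (univ.filter (fun x => g x = g e)).erase e := by
    intro e; rw [htp e]; exact Finset.mem_singleton_self _
  have hg : ∀ e, g (t e) = g e := by
    intro e
    have := hmem e
    rw [Finset.mem_erase, Finset.mem_filter] at this
    exact this.2.2
  have hne' : ∀ e, t e ≠ e := by
    intro e
    have := hmem e
    rw [Finset.mem_erase] at this
    exact this.1
  refine ⟨t, fun e => ⟨hg e, ?_, hne' e⟩⟩
  have he : e ∈ (univ.filter (fun x => g x = g (t e))).erase (t e) := by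
    rw [Finset.mem_erase, Finset.mem_filter]
    exact ⟨fun h => hne' e h.symm, Finset.mem_univ e, (hg e).symm⟩
  rw [htp (t e), Finset.mem_singleton] at he
  exact he.symm

lemma pair4 {α : Type*} [DecidableEq α] (S : Finset α) (h : S.card = 4) :
    ∃ c : α → α, ∀ x ∈ S, c x ∈ S ∧ c (c x) = x ∧ c x ≠ x := by
  classical
  have hcard : Fintype.card ↑S = 4 := by rw [Fintype.card_coe, h]
  obtain ⟨eqv⟩ : Nonempty (↑S ≃ Fin 4) := ⟨Fintype.equivFinOfCardEq hcard⟩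
  let flip : Fin 4 → Fin 4 := ![1, 0, 3, 2]
  have hflip : ∀ i, flip (flip i) = i := by decide
  have hflipne : ∀ i, flip i ≠ i := by decide
  set F : ↑S → ↑S := fun s => eqv.symm (flip (eqv s)) with hFdef
  have hFF : ∀ s, F (F s) = s := by
    intro s
    rw [hFdef]
    simp only [Equiv.apply_symm_apply, hflip, Equiv.symm_apply_apply]
  have hFne : ∀ s, F s ≠ s := by
    intro s hs
    apply hflipne (eqv s)
    have : eqv.symm (flip (eqv s)) = s := hs
    rw [Equiv.symm_apply_eq] at this
    rw [this]
  set c : α → α := fun x => if hx : x ∈ S then (F ⟨x, hx⟩).1 else x with hcdef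
  have hc : ∀ (x) (hx : x ∈ S), c x = (F ⟨x, hx⟩).1 := by
    intro x hx
    rw [hcdef]
    exact dif_pos hx
  refine ⟨c, fun x hx => ?_⟩
  have hx2 : (F ⟨x, hx⟩).1 ∈ S := (F ⟨x, hx⟩).2
  refine ⟨by rw [hc x hx]; exact hx2, ?_, ?_⟩
  · rw [hc x hx, hc _ hx2]
    have hsub : (⟨(F ⟨x, hx⟩).1, hx2⟩ : ↑S) = F ⟨x, hx⟩ := Subtype.ext rfl
    rw [hsub, hFF]
  · rw [hc x hx]
    intro hcon
    exact hFne ⟨x, hx⟩ (Subtype.ext hcon)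

lemma halfCount {X : Type*} [DecidableEq X] (S : Finset X) (t : X → X) (f : X → Bool)
    (ht : ∀ x ∈ S, t x ∈ S ∧ t (t x) = x ∧ f (t x) ≠ f x) (k : ℕ) (hS : S.card = 2 * k)
    (b : Bool) : (S.filter (fun x => f x = b)).card = k := by
  classical
  have hbij : (S.filter (fun x => f x = b)).card = (S.filter (fun x => f x = !b)).card := by
    apply Finset.card_nbij' t t
    · intro x hx
      rw [Finset.mem_coe, Finset.mem_filter] at hx ⊢
      obtain ⟨h1, h2, h3⟩ := ht x hx.1
      refine ⟨h1, ?_⟩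
      revert h3; rw [hx.2]; cases b <;> simp
    · intro x hx
      rw [Finset.mem_coe, Finset.mem_filter] at hx ⊢
      obtain ⟨h1, h2, h3⟩ := ht x hx.1
      refine ⟨h1, ?_⟩
      revert h3; rw [hx.2]; cases b <;> simp
    · intro x hx
      rw [Finset.mem_coe, Finset.mem_filter] at hx
      exact (ht x hx.1).2.1
    · intro x hx
      rw [Finset.mem_coe, Finset.mem_filter] at hx
      exact (ht x hx.1).2.1
  have hsum := Finset.card_filter_add_card_filter_not (s := S) (p := fun x => f x = b)
  have heq : S.filter (fun x => ¬ (f x = b)) = S.filter (fun x => f x = !b) := by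
    apply Finset.filter_congr
    intro x _
    cases b <;> cases hfx : f x <;> simp [hfx]
  rw [heq] at hsum
  omega

set_option linter.unusedSectionVars false

section MainProof
variable {V E : Type*} [Fintype V] [DecidableEq V] [Fintype E] [DecidableEq E]

theorem stmt6aux (ends : E → Sym2 V)
    (hloop : ∀ e, ¬ (ends e).IsDiag)
    (hreg : ∀ v, (Finset.univ.filter (fun e => v ∈ ends e)).card = 4) :
    ∃ f : E → Bool, ∀ (v : V) (b : Bool),
      (Finset.univ.filter (fun e => v ∈ ends e ∧ f e = b)).card = 2 := by
  classical
  -- canonical endpoints of each edge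
  have hu : ∀ e, (ends e).out.1 ∈ ends e := fun e => Sym2.out_fst_mem (ends e)
  set u : E → V := fun e => (ends e).out.1 with hudef
  set w : E → V := fun e => Sym2.Mem.other' (hu e) with hwdef
  have hw : ∀ e, w e ∈ ends e := fun e => Sym2.other_mem' (hu e)
  have hends : ∀ e, ends e = s(u e, w e) := fun e => (Sym2.other_spec' (hu e)).symm
  have hwu : ∀ e, w e ≠ u e := by
    intro e
    have h := Sym2.other_ne (hloop e) (hu e)
    rwa [Sym2.other_eq_other'] at h
  -- the incidence type
  let I := {p : V × E // p.1 ∈ ends p.2}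
  -- involution a : switch to other endpoint
  let ia : I → I := fun p => ⟨(Sym2.Mem.other' p.2, p.1.2), Sym2.other_mem' p.2⟩
  have hia2 : ∀ p, ia (ia p) = p := by
    intro p
    apply Subtype.ext
    apply Prod.ext
    · exact Sym2.other_invol' p.2 (Sym2.other_mem' p.2)
    · rfl
  have hiane : ∀ p, ia p ≠ p := by
    intro p hp
    have h := Sym2.other_ne (hloop p.1.2) p.2
    rw [Sym2.other_eq_other'] at h
    exact h (congrArg (fun q : I => q.1.1) hp)
  -- involution c : pair up the four incidences at each vertex
  have hpair : ∀ v : V, ∃ c : E → E, ∀ x ∈ Finset.univ.filter (fun e => v ∈ ends e),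
      c x ∈ Finset.univ.filter (fun e => v ∈ ends e) ∧ c (c x) = x ∧ c x ≠ x :=
    fun v => pair4 _ (hreg v)
  choose cs hcs using hpair
  have hcsmem : ∀ (v e), v ∈ ends e → v ∈ ends (cs v e) := by
    intro v e h
    have := (hcs v e (by simp [h])).1
    rw [Finset.mem_filter] at this
    exact this.2
  let ic : I → I := fun p => ⟨(p.1.1, cs p.1.1 p.1.2), hcsmem p.1.1 p.1.2 p.2⟩
  have hic2 : ∀ p, ic (ic p) = p := by
    intro p
    apply Subtype.ext
    apply Prod.ext
    · rfl
    · exact (hcs p.1.1 p.1.2 (by simp [p.2])).2.1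
  have hicne : ∀ p, ic p ≠ p := by
    intro p hp
    exact (hcs p.1.1 p.1.2 (by simp [p.2])).2.2 (congrArg (fun q : I => q.1.2) hp)
  -- first application: Eulerian orientation
  obtain ⟨h1, hh1⟩ := twoInvColor ia ic hia2 hic2 hiane hicne
  -- incidences of endpoints
  let iu : E → I := fun e => ⟨(u e, e), hu e⟩
  let iw : E → I := fun e => ⟨(w e, e), hw e⟩
  have ha_iu : ∀ e, ia (iu e) = iw e := fun e => Subtype.ext rfl
  have hw1 : ∀ e, h1 (iw e) = !(h1 (iu e)) := by
    intro e
    have h := (hh1 (iu e)).1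
    rw [ha_iu e] at h
    revert h
    cases h1 (iu e) <;> cases h1 (iw e) <;> simp
  -- orientation
  set tail : E → V := fun e => if h1 (iu e) = true then w e else u e with htaildef
  set head : E → V := fun e => if h1 (iu e) = true then u e else w e with hheaddef
  have htail_t : ∀ e, h1 (iu e) = true → tail e = w e := by
    intro e h; rw [htaildef]; dsimp only; rw [if_pos h]
  have htail_f : ∀ e, h1 (iu e) = false → tail e = u e := by
    intro e h; rw [htaildef]; dsimp only; rw [if_neg (by rw [h]; simp)]
  have hhead_t : ∀ e, h1 (iu e) = true → head e = u e := by
    intro e h; rw [hheaddef]; dsimp only; rw [if_pos h]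
  have hhead_f : ∀ e, h1 (iu e) = false → head e = w e := by
    intro e h; rw [hheaddef]; dsimp only; rw [if_neg (by rw [h]; simp)]
  have htail_mem : ∀ e, tail e ∈ ends e := by
    intro e
    rcases hcase : h1 (iu e) with _ | _
    · rw [htail_f e hcase]; exact hu e
    · rw [htail_t e hcase]; exact hw e
  have hhead_mem : ∀ e, head e ∈ ends e := by
    intro e
    rcases hcase : h1 (iu e) with _ | _
    · rw [hhead_f e hcase]; exact hw e
    · rw [hhead_t e hcase]; exact hu e
  have hth : ∀ e, tail e ≠ head e := by
    intro e
    rcases hcase : h1 (iu e) with _ | _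
    · rw [htail_f e hcase, hhead_f e hcase]
      exact fun h => hwu e h.symm
    · rw [htail_t e hcase, hhead_t e hcase]
      exact hwu e
  -- characterization of tail/head via h1
  have htail_iff : ∀ (e) (v) (h : v ∈ ends e), (tail e = v ↔ h1 ⟨(v, e), h⟩ = false) := by
    intro e v h
    have h' := h
    rw [hends e, Sym2.mem_iff] at h'
    rcases h' with rfl | rfl
    · have hpe : (⟨(u e, e), h⟩ : I) = iu e := Subtype.ext rfl
      rw [hpe]
      rcases hcase : h1 (iu e) with _ | _
      · rw [htail_f e hcase]; simp
      · rw [htail_t e hcase]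
        simp only [Bool.true_eq_false, iff_false]
        exact hwu e
    · have hpe : (⟨(w e, e), h⟩ : I) = iw e := Subtype.ext rfl
      rw [hpe, hw1 e]
      rcases hcase : h1 (iu e) with _ | _
      · rw [htail_f e hcase]
        simp only [Bool.not_false, Bool.true_eq_false, iff_false]
        exact fun hh => hwu e hh.symm
      · rw [htail_t e hcase]; simp
  have hhead_iff : ∀ (e) (v) (h : v ∈ ends e), (head e = v ↔ h1 ⟨(v, e), h⟩ = true) := by
    intro e v h
    have h' := h
    rw [hends e, Sym2.mem_iff] at h'
    rcases h' with rfl | rfl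
    · have hpe : (⟨(u e, e), h⟩ : I) = iu e := Subtype.ext rfl
      rw [hpe]
      rcases hcase : h1 (iu e) with _ | _
      · rw [hhead_f e hcase]
        simp only [Bool.false_eq_true, iff_false]
        exact hwu e
      · rw [hhead_t e hcase]; simp
    · have hpe : (⟨(w e, e), h⟩ : I) = iw e := Subtype.ext rfl
      rw [hpe, hw1 e]
      rcases hcase : h1 (iu e) with _ | _
      · rw [hhead_f e hcase]; simp
      · rw [hhead_t e hcase]
        simp only [Bool.not_true, Bool.false_eq_true, iff_false]
        exact fun hh => hwu e hh.symm
  -- Bool marker on edges at a vertex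
  set Fv : V → E → Bool := fun v e => if h : v ∈ ends e then h1 ⟨(v, e), h⟩ else true
    with hFvdef
  have hFv : ∀ (v e) (h : v ∈ ends e), Fv v e = h1 ⟨(v, e), h⟩ := by
    intro v e h
    rw [hFvdef]
    exact dif_pos h
  have hcsflip : ∀ (v e) (h : v ∈ ends e),
      Fv v (cs v e) ≠ Fv v e := by
    intro v e h
    have hm2 : v ∈ ends (cs v e) := hcsmem v e h
    rw [hFv v e h, hFv v (cs v e) hm2]
    have hic : (⟨(v, cs v e), hm2⟩ : I) = ic ⟨(v, e), h⟩ := Subtype.ext rfl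
    rw [hic]
    exact (hh1 ⟨(v, e), h⟩).2
  -- counting out-edges and in-edges
  have htcount : ∀ v : V, (Finset.univ.filter (fun e => tail e = v)).card = 2 := by
    intro v
    have hs : Finset.univ.filter (fun e => tail e = v)
        = (Finset.univ.filter (fun e => v ∈ ends e)).filter (fun e => Fv v e = false) := by
      ext e
      simp only [Finset.mem_filter, Finset.mem_univ, true_and]
      constructor
      · intro ht
        have hm : v ∈ ends e := ht ▸ htail_mem e
        refine ⟨hm, ?_⟩
        rw [hFv v e hm]
        exact (htail_iff e v hm).mp ht
      · rintro ⟨hm, hfv⟩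
        rw [hFv v e hm] at hfv
        exact (htail_iff e v hm).mpr hfv
    rw [hs]
    apply halfCount _ (cs v) (Fv v) _ 2 (hreg v) false
    intro e he
    have hm : v ∈ ends e := (Finset.mem_filter.mp he).2
    obtain ⟨h1', h2', _⟩ := hcs v e he
    exact ⟨h1', h2', hcsflip v e hm⟩
  have hhcount : ∀ v : V, (Finset.univ.filter (fun e => head e = v)).card = 2 := by
    intro v
    have hs : Finset.univ.filter (fun e => head e = v)
        = (Finset.univ.filter (fun e => v ∈ ends e)).filter (fun e => Fv v e = true) := by
      ext e
      simp only [Finset.mem_filter, Finset.mem_univ, true_and]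
      constructor
      · intro ht
        have hm : v ∈ ends e := ht ▸ hhead_mem e
        refine ⟨hm, ?_⟩
        rw [hFv v e hm]
        exact (hhead_iff e v hm).mp ht
      · rintro ⟨hm, hfv⟩
        rw [hFv v e hm] at hfv
        exact (hhead_iff e v hm).mpr hfv
    rw [hs]
    apply halfCount _ (cs v) (Fv v) _ 2 (hreg v) true
    intro e he
    have hm : v ∈ ends e := (Finset.mem_filter.mp he).2
    obtain ⟨h1', h2', _⟩ := hcs v e he
    exact ⟨h1', h2', hcsflip v e hm⟩
  -- second application: swap the two out-edges / the two in-edges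
  obtain ⟨tt, htt⟩ := pairInv tail (fun e => htcount (tail e))
  obtain ⟨th, hth'⟩ := pairInv head (fun e => hhcount (head e))
  obtain ⟨f, hf⟩ := twoInvColor tt th (fun e => (htt e).2.1) (fun e => (hth' e).2.1)
    (fun e => (htt e).2.2) (fun e => (hth' e).2.2)
  refine ⟨f, fun v b => ?_⟩
  -- membership split
  have hsplit : ∀ e : E, (v ∈ ends e ∧ f e = b) ↔
      ((tail e = v ∧ f e = b) ∨ (head e = v ∧ f e = b)) := by
    intro e
    constructor
    · rintro ⟨hm, hfb⟩
      rw [hends e, Sym2.mem_iff] at hm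
      rcases hcase : h1 (iu e) with _ | _
      · rcases hm with rfl | rfl
        · exact Or.inl ⟨htail_f e hcase, hfb⟩
        · exact Or.inr ⟨hhead_f e hcase, hfb⟩
      · rcases hm with rfl | rfl
        · exact Or.inr ⟨hhead_t e hcase, hfb⟩
        · exact Or.inl ⟨htail_t e hcase, hfb⟩
    · rintro (⟨hm, hfb⟩ | ⟨hm, hfb⟩)
      · exact ⟨hm ▸ htail_mem e, hfb⟩
      · exact ⟨hm ▸ hhead_mem e, hfb⟩
  rw [Finset.filter_congr (fun e _ => hsplit e), Finset.filter_or]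
  rw [Finset.card_union_of_disjoint]
  · have hc1 : (Finset.univ.filter (fun e => tail e = v ∧ f e = b)).card = 1 := by
      rw [← Finset.filter_filter]
      apply halfCount _ tt f _ 1 (htcount v) b
      intro e he
      refine ⟨?_, (htt e).2.1, (hf e).1⟩
      refine Finset.mem_filter.mpr ⟨Finset.mem_univ _, ?_⟩
      rw [(htt e).1, (Finset.mem_filter.mp he).2]
    have hc2 : (Finset.univ.filter (fun e => head e = v ∧ f e = b)).card = 1 := by
      rw [← Finset.filter_filter]
      apply halfCount _ th f _ 1 (hhcount v) b
      intro e he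
      refine ⟨?_, (hth' e).2.1, (hf e).2⟩
      refine Finset.mem_filter.mpr ⟨Finset.mem_univ _, ?_⟩
      rw [(hth' e).1, (Finset.mem_filter.mp he).2]
    rw [hc1, hc2]
  · rw [Finset.disjoint_left]
    intro e he1 he2
    rw [Finset.mem_filter] at he1 he2
    exact hth e (he1.2.1.trans he2.2.1.symm)

end MainProof

/-- every loopless 4-regular multigraph (at most two parallel edges between any
pair of vertices) admits a 2-cycle-coloring: the edges can be colored with two colors so that
every vertex has degree exactly 2 in each color class. -/
theorem stmt6 {V E : Type*} [Fintype V] [DecidableEq V] [Fintype E] [DecidableEq E]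
    (ends : E → Sym2 V)
    (hloop : ∀ e, ¬ (ends e).IsDiag)
    (hmult : ∀ p : Sym2 V, (Finset.univ.filter (fun e => ends e = p)).card ≤ 2)
    (hreg : ∀ v, (Finset.univ.filter (fun e => v ∈ ends e)).card = 4) :
    ∃ f : E → Bool, ∀ (v : V) (b : Bool),
      (Finset.univ.filter (fun e => v ∈ ends e ∧ f e = b)).card = 2 := by
  exact stmt6aux ends hloop hreg
end

section
/- If a 4-regular loopless multigraph H can be well 2-cycle-colored (2-cycle-colored so that every monochromatic cycle has length at least 5), then there exists a set E' of edges with w(E') ≤ (1/5) w(H) such that H minus E' can be 2-path-colored (edges colored with two colors, each color class a disjoint union of simple paths). -/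
open Finset

variable {V E : Type*}

/-- Degree of a vertex in a set of multigraph edges given by their endpoints. -/
def mdeg [DecidableEq V] (ends : E → Sym2 V) (s : Finset E) (v : V) : ℕ :=
  (s.filter (fun e => v ∈ ends e)).card

/-- A nonempty connected edge set in which every incident vertex has degree exactly 2:
a single cycle. -/
def IsCycleSet [DecidableEq V] [DecidableEq E] (ends : E → Sym2 V) (s : Finset E) : Prop :=
  s.Nonempty ∧ (∀ v, mdeg ends s v = 0 ∨ mdeg ends s v = 2) ∧
    ∀ t ⊆ s, t.Nonempty → t ≠ s →
      ∃ e ∈ t, ∃ e' ∈ s \ t, ∃ v : V, v ∈ ends e ∧ v ∈ ends e'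

/-- An edge set forming a vertex-disjoint union of simple paths: all degrees are at most 2
and every nonempty subset has a vertex of degree 1 (no cycles). -/
def IsPathFamily [DecidableEq V] [DecidableEq E] (ends : E → Sym2 V) (s : Finset E) : Prop :=
  (∀ v, mdeg ends s v ≤ 2) ∧ ∀ t ⊆ s, t.Nonempty → ∃ v, mdeg ends t v = 1

section Aux
variable [DecidableEq V] [DecidableEq E]

def adjE (ends : E → Sym2 V) (s : Finset E) (x y : E) : Prop :=
  y ∈ s ∧ ∃ v, v ∈ ends x ∧ v ∈ ends y

noncomputable def comp (ends : E → Sym2 V) (s : Finset E) (e : E) : Finset E :=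
  @Finset.filter _ (fun x => Relation.ReflTransGen (adjE ends s) e x) (Classical.decPred _) s

lemma mem_comp {ends : E → Sym2 V} {s : Finset E} {e x : E} :
    x ∈ comp ends s e ↔ x ∈ s ∧ Relation.ReflTransGen (adjE ends s) e x := by
  simp [comp, Finset.mem_filter]

lemma comp_subset {ends : E → Sym2 V} {s : Finset E} {e : E} : comp ends s e ⊆ s :=
  fun x hx => (mem_comp.1 hx).1

lemma mem_comp_self {ends : E → Sym2 V} {s : Finset E} {e : E} (he : e ∈ s) :
    e ∈ comp ends s e := mem_comp.2 ⟨he, .refl⟩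

lemma reach_mem {ends : E → Sym2 V} {s : Finset E} {x y : E} (hx : x ∈ s)
    (h : Relation.ReflTransGen (adjE ends s) x y) : y ∈ s := by
  induction h with
  | refl => exact hx
  | tail _ h2 _ => exact h2.1

lemma reach_symm {ends : E → Sym2 V} {s : Finset E} {x y : E} (hx : x ∈ s)
    (h : Relation.ReflTransGen (adjE ends s) x y) :
    Relation.ReflTransGen (adjE ends s) y x := by
  induction h with
  | refl => exact .refl
  | @tail z y' h1 h2 ih =>
    obtain ⟨hy's, v, hvz, hvy⟩ := h2
    exact Relation.ReflTransGen.head ⟨reach_mem hx h1, v, hvy, hvz⟩ ih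

lemma comp_eq_of_mem {ends : E → Sym2 V} {s : Finset E} {e x : E} (he : e ∈ s)
    (hx : x ∈ comp ends s e) : comp ends s x = comp ends s e := by
  obtain ⟨hxs, hr⟩ := mem_comp.1 hx
  ext y
  simp only [mem_comp]
  constructor
  · rintro ⟨hys, h⟩; exact ⟨hys, hr.trans h⟩
  · rintro ⟨hys, h⟩; exact ⟨hys, (reach_symm he hr).trans h⟩

lemma crossing {ends : E → Sym2 V} {s t : Finset E} {x y : E}
    (h : Relation.ReflTransGen (adjE ends s) x y) (hx : x ∈ t) :
    y ∉ t → ∃ a ∈ t, ∃ b, b ∉ t ∧ adjE ends s a b ∧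
      Relation.ReflTransGen (adjE ends s) x b := by
  induction h with
  | refl => exact fun hy => absurd hx hy
  | @tail z y' h1 h2 ih =>
    intro hy
    by_cases hz : z ∈ t
    · exact ⟨z, hz, y', hy, h2, h1.tail h2⟩
    · obtain ⟨a, ha, b, hb, hab, hr⟩ := ih hz
      exact ⟨a, ha, b, hb, hab, hr⟩

lemma mdeg_mono {ends : E → Sym2 V} {s t : Finset E} (h : t ⊆ s) (v : V) :
    mdeg ends t v ≤ mdeg ends s v :=
  Finset.card_le_card (Finset.filter_subset_filter _ h)

lemma comp_closed {ends : E → Sym2 V} {s : Finset E} {e x y : E}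
    (hx : x ∈ comp ends s e) (hy : y ∈ s) (v : V) (hvx : v ∈ ends x) (hvy : v ∈ ends y) :
    y ∈ comp ends s e := by
  obtain ⟨hxs, hr⟩ := mem_comp.1 hx
  exact mem_comp.2 ⟨hy, hr.tail ⟨hy, v, hvx, hvy⟩⟩

lemma isCycleSet_comp {ends : E → Sym2 V} {s : Finset E}
    (hs : ∀ v, mdeg ends s v = 2) {e : E} (he : e ∈ s) :
    IsCycleSet ends (comp ends s e) := by
  refine ⟨⟨e, mem_comp_self he⟩, ?_, ?_⟩
  · intro v
    by_cases hv : ∃ x ∈ comp ends s e, v ∈ ends x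
    · right
      obtain ⟨x, hx, hvx⟩ := hv
      have hfil : (comp ends s e).filter (fun e => v ∈ ends e)
          = s.filter (fun e => v ∈ ends e) := by
        apply Finset.Subset.antisymm
        · exact Finset.filter_subset_filter _ comp_subset
        · intro y hy
          obtain ⟨hys, hvy⟩ := Finset.mem_filter.1 hy
          exact Finset.mem_filter.2 ⟨comp_closed hx hys v hvx hvy, hvy⟩
      simp only [mdeg, hfil]
      exact hs v
    · left
      push_neg at hv
      simp only [mdeg, Finset.card_eq_zero]
      exact Finset.filter_eq_empty_iff.2 (fun x hx => hv x hx)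
  · intro t ht htne htne'
    obtain ⟨x, hxt⟩ := htne
    have hss : t ⊂ comp ends s e := lt_of_le_of_ne ht htne'
    obtain ⟨y, hyC, hyt⟩ := Finset.exists_of_ssubset hss
    have hrex : Relation.ReflTransGen (adjE ends s) e x := (mem_comp.1 (ht hxt)).2
    have hrey : Relation.ReflTransGen (adjE ends s) e y := (mem_comp.1 hyC).2
    have hrxy : Relation.ReflTransGen (adjE ends s) x y := (reach_symm he hrex).trans hrey
    obtain ⟨a, ha, b, hb, hab, hr⟩ := crossing hrxy hxt hyt
    obtain ⟨hbs, v, hva, hvb⟩ := hab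
    exact ⟨a, ha, b, Finset.mem_sdiff.2 ⟨mem_comp.2 ⟨hbs, hrex.trans hr⟩, hb⟩, v, hva, hvb⟩

noncomputable def pick (w : E → ℝ) (S : Finset E) (e : E) : E :=
  if h : S.Nonempty then (S.exists_min_image w h).choose else e

lemma pick_mem {w : E → ℝ} {S : Finset E} {e : E} (h : S.Nonempty) : pick w S e ∈ S := by
  rw [pick, dif_pos h]
  exact (S.exists_min_image w h).choose_spec.1

lemma pick_min {w : E → ℝ} {S : Finset E} {e : E} (h : S.Nonempty) :
    ∀ x ∈ S, w (pick w S e) ≤ w x := by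
  rw [pick, dif_pos h]
  exact fun x hx => (S.exists_min_image w h).choose_spec.2 x hx

lemma pick_indep {w : E → ℝ} {S : Finset E} {e e' : E} (h : S.Nonempty) :
    pick w S e = pick w S e' := by
  rw [pick, pick, dif_pos h, dif_pos h]

lemma color_bound (ends : E → Sym2 V) (w : E → ℝ) (hw : ∀ e, 0 ≤ w e)
    (s : Finset E) (hs : ∀ v, mdeg ends s v = 2)
    (hbig : ∀ e ∈ s, 5 ≤ (comp ends s e).card) :
    ∃ D : Finset E, D ⊆ s ∧ (∑ x ∈ D, w x) ≤ (1/5) * ∑ e ∈ s, w e ∧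
      ∀ t ⊆ s \ D, t.Nonempty → ∃ v, mdeg ends t v = 1 := by
  classical
  set m : E → E := fun e => pick w (comp ends s e) e with hm
  set D : Finset E := s.image m with hD
  have hcompne : ∀ e ∈ s, (comp ends s e).Nonempty := fun e he => ⟨e, mem_comp_self he⟩
  have hmmem : ∀ e ∈ s, m e ∈ comp ends s e := fun e he => pick_mem (hcompne e he)
  have hDs : D ⊆ s := by
    intro x hx
    obtain ⟨e, he, rfl⟩ := Finset.mem_image.1 hx
    exact comp_subset (hmmem e he)
  -- fibers
  have key : ∀ x ∈ D, s.filter (fun e => m e = x) = comp ends s x := by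
    intro x hx
    obtain ⟨e0, he0, hx0⟩ := Finset.mem_image.1 hx
    have hxC0 : x ∈ comp ends s e0 := hx0 ▸ hmmem e0 he0
    have hxs : x ∈ s := comp_subset hxC0
    have hcx : comp ends s x = comp ends s e0 := comp_eq_of_mem he0 hxC0
    ext e
    simp only [Finset.mem_filter]
    constructor
    · rintro ⟨hes, hme⟩
      have hxCe : x ∈ comp ends s e := hme ▸ hmmem e hes
      have : comp ends s x = comp ends s e := comp_eq_of_mem hes hxCe
      rw [this]; exact mem_comp_self hes
    · intro heCx
      have hes : e ∈ s := comp_subset heCx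
      have hce : comp ends s e = comp ends s x := comp_eq_of_mem hxs heCx
      refine ⟨hes, ?_⟩
      have hme : m e = pick w (comp ends s e0) e := by rw [hm]; simp only []; rw [hce, hcx]
      rw [hme, pick_indep (hcompne e0 he0) (e' := e0)]
      exact hx0
  have hmx : ∀ x ∈ D, ∀ e ∈ comp ends s x, w x ≤ w e := by
    intro x hx
    obtain ⟨e0, he0, hx0⟩ := Finset.mem_image.1 hx
    have hxC0 : x ∈ comp ends s e0 := hx0 ▸ hmmem e0 he0
    have hcx : comp ends s x = comp ends s e0 := comp_eq_of_mem he0 hxC0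
    intro e he
    rw [hcx] at he
    calc w x = w (m e0) := by rw [hx0]
    _ ≤ w e := pick_min (hcompne e0 he0) e he
  refine ⟨D, hDs, ?_, ?_⟩
  · have step1 : ∀ x ∈ D, w x ≤ (1/5) * ∑ e ∈ comp ends s x, w e := by
      intro x hx
      have hxs : x ∈ s := hDs hx
      have hcard : 5 ≤ (comp ends s x).card := hbig x hxs
      have hsum : ((comp ends s x).card : ℝ) * w x ≤ ∑ e ∈ comp ends s x, w e := by
        have := Finset.card_nsmul_le_sum (comp ends s x) w (w x) (fun e he => hmx x hx e he)
        simpa [nsmul_eq_mul] using this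
      have h5 : (5 : ℝ) * w x ≤ ((comp ends s x).card : ℝ) * w x := by
        apply mul_le_mul_of_nonneg_right _ (hw x)
        exact_mod_cast hcard
      nlinarith [h5.trans hsum]
    calc ∑ x ∈ D, w x ≤ ∑ x ∈ D, (1/5) * ∑ e ∈ comp ends s x, w e :=
          Finset.sum_le_sum step1
      _ = (1/5) * ∑ x ∈ D, ∑ e ∈ s.filter (fun e => m e = x), w e := by
          rw [← Finset.mul_sum]
          congr 1
          exact Finset.sum_congr rfl (fun x hx => by rw [key x hx])
      _ = (1/5) * ∑ e ∈ s, w e := by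
          congr 1
          exact Finset.sum_fiberwise_of_maps_to (fun e he => Finset.mem_image_of_mem m he) w
  · intro t ht htne
    by_contra hno
    push_neg at hno
    obtain ⟨e0, he0t⟩ := htne
    have hts : t ⊆ s := ht.trans (Finset.sdiff_subset)
    have he0s : e0 ∈ s := hts he0t
    have hclose : ∀ x, Relation.ReflTransGen (adjE ends s) e0 x → x ∈ t := by
      intro x hx
      induction hx with
      | refl => exact he0t
      | @tail z y h1 h2 ih =>
        obtain ⟨hys, v, hvz, hvy⟩ := h2
        have hzt : z ∈ t := ih
        have h1' : mdeg ends t v ≠ 0 := by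
          simp only [mdeg, ← Finset.card_ne_zero] at *
          intro hcz
          rw [Finset.card_eq_zero] at hcz
          have : z ∈ t.filter (fun e => v ∈ ends e) := Finset.mem_filter.2 ⟨hzt, hvz⟩
          simp [hcz] at this
        have h2' : mdeg ends t v = 2 := by
          have hle := mdeg_mono (ends := ends) hts v
          rw [hs v] at hle
          have hno' := hno v
          omega
        have heq : t.filter (fun e => v ∈ ends e) = s.filter (fun e => v ∈ ends e) := by
          apply Finset.eq_of_subset_of_card_le (Finset.filter_subset_filter _ hts)
          show mdeg ends s v ≤ mdeg ends t v
          rw [hs v, h2']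
        have : y ∈ s.filter (fun e => v ∈ ends e) := Finset.mem_filter.2 ⟨hys, hvy⟩
        rw [← heq] at this
        exact (Finset.mem_filter.1 this).1
    have hsub : comp ends s e0 ⊆ t := fun x hx => hclose x (mem_comp.1 hx).2
    have hmD : m e0 ∈ D := Finset.mem_image_of_mem m he0s
    have hmt : m e0 ∈ t := hsub (hmmem e0 he0s)
    have := Finset.mem_sdiff.1 (ht hmt)
    exact this.2 hmD

end Aux

/-- if a loopless 4-regular multigraph `H` can be well 2-cycle-colored (a
2-cycle-coloring `g` in which every monochromatic cycle has length at least 5), then there is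
a set `E'` of edges with `w(E') ≤ (1/5) w(H)` whose removal leaves a 2-path-colorable graph. -/
theorem stmt7 [Fintype V] [DecidableEq V] [Fintype E] [DecidableEq E]
    (ends : E → Sym2 V) (w : E → ℝ) (hw : ∀ e, 0 ≤ w e)
    (hloop : ∀ e, ¬ (ends e).IsDiag)
    (hmult : ∀ p : Sym2 V, (Finset.univ.filter (fun e => ends e = p)).card ≤ 2)
    (hreg : ∀ v, mdeg ends Finset.univ v = 4)
    (g : E → Bool)
    (hcyc : ∀ (v : V) (b : Bool), mdeg ends (Finset.univ.filter (fun e => g e = b)) v = 2)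
    (hwell : ∀ s : Finset E, (∃ b, ∀ e ∈ s, g e = b) → IsCycleSet ends s → 5 ≤ s.card) :
    ∃ E' : Finset E, (∑ e ∈ E', w e) ≤ (1 / 5) * ∑ e : E, w e ∧
      ∃ f : E → Bool, ∀ b : Bool,
        IsPathFamily ends ((Finset.univ \ E').filter (fun e => f e = b)) := by
  classical
  set sb : Bool → Finset E := fun b => Finset.univ.filter (fun e => g e = b) with hsb
  have hsdeg : ∀ b v, mdeg ends (sb b) v = 2 := fun b v => hcyc v b
  have hbig : ∀ b, ∀ e ∈ sb b, 5 ≤ (comp ends (sb b) e).card := by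
    intro b e he
    apply hwell _ ⟨b, fun e' he' => (Finset.mem_filter.1 (comp_subset he')).2⟩
    exact isCycleSet_comp (hsdeg b) he
  obtain ⟨Dt, hDts, hDtw, hDtpath⟩ :=
    color_bound ends w hw (sb true) (hsdeg true) (hbig true)
  obtain ⟨Df, hDfs, hDfw, hDfpath⟩ :=
    color_bound ends w hw (sb false) (hsdeg false) (hbig false)
  have hdisj : Disjoint Dt Df := by
    apply Finset.disjoint_left.2
    intro x hxt hxf
    have h1 := (Finset.mem_filter.1 (hDts hxt)).2
    have h2 := (Finset.mem_filter.1 (hDfs hxf)).2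
    simp [h1] at h2
  refine ⟨Dt ∪ Df, ?_, g, ?_⟩
  · rw [Finset.sum_union hdisj]
    have hsplit : ∑ e ∈ sb true, w e + ∑ e ∈ sb false, w e = ∑ e : E, w e := by
      rw [hsb]
      have : (Finset.univ.filter (fun e => g e = false))
          = Finset.univ.filter (fun e => ¬ (g e = true)) := by
        apply Finset.filter_congr
        intro x _
        simp
      simp only [this]
      exact Finset.sum_filter_add_sum_filter_not _ _ _
    linarith
  · intro b
    have hPsub : (Finset.univ \ (Dt ∪ Df)).filter (fun e => g e = b) ⊆ sb b := by
      intro e he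
      obtain ⟨h1, h2⟩ := Finset.mem_filter.1 he
      exact Finset.mem_filter.2 ⟨Finset.mem_univ e, h2⟩
    constructor
    · intro v
      calc mdeg ends _ v ≤ mdeg ends (sb b) v := mdeg_mono hPsub v
        _ = 2 := hsdeg b v
    · intro t ht htne
      have hDb : ∀ t ⊆ sb b \ (if b then Dt else Df), t.Nonempty → ∃ v, mdeg ends t v = 1 := by
        cases b
        · exact hDfpath
        · exact hDtpath
      apply hDb _ _ htne
      intro e he
      have he' := ht he
      obtain ⟨h1, h2⟩ := Finset.mem_filter.1 he'
      obtain ⟨_, h3⟩ := Finset.mem_sdiff.1 h1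
      apply Finset.mem_sdiff.2
      refine ⟨Finset.mem_filter.2 ⟨Finset.mem_univ e, h2⟩, ?_⟩
      intro hcon
      apply h3
      cases b
      · exact Finset.mem_union_right _ hcon
      · exact Finset.mem_union_left _ hcon
end

section
/- If a monochromatic cycle c in a colored graph consists only of charged edges, where the charged edges are k ≥ 2 blank edges on c together with their heads, then either every blank edge on c is immediately followed (clockwise) by its own head, or every blank edge on c is immediately preceded by its head; in particular, the segments between consecutive blank edges each consist of a single edge. -/
open Finset

/-- if a monochromatic cycle `c` (a cyclic sequence of `m` distinct edges)
consists only of charged edges — `k ≥ 2` blank edges together with their heads, where the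
heads of a blank edge on the cycle are adjacent to it and lie on a single side, and blank
edges are pairwise non-adjacent — then either every blank edge is immediately followed by its
own head, or every blank edge is immediately preceded by its own head; in particular the
segments between consecutive blank edges each consist of a single edge. -/
theorem stmt8 {E : Type*} [DecidableEq E] (m : ℕ) [NeZero m] (hm : 3 ≤ m)
    (c : ZMod m → E) (hinj : Function.Injective c)
    (blank : E → Prop) [DecidablePred blank]
    (heads : E → Finset E)
    (hside : ∀ i, blank (c i) →
      (∀ j, c j ∈ heads (c i) → j = i + 1) ∨ (∀ j, c j ∈ heads (c i) → j = i - 1))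
    (hnonadj : ∀ i, blank (c i) → ¬ blank (c (i + 1)))
    (hcharged : ∀ i, blank (c i) ∨ ∃ j, blank (c j) ∧ c i ∈ heads (c j))
    (hk : 2 ≤ (Finset.univ.filter (fun i => blank (c i))).card) :
    ((∀ i, blank (c i) → c (i + 1) ∈ heads (c i)) ∨
      (∀ i, blank (c i) → c (i - 1) ∈ heads (c i))) ∧
      ∀ i, blank (c i) → blank (c (i + 2)) := by
  have h2 : (2 : ZMod m) ≠ 0 := by
    have : ¬ ((2:ℕ) : ZMod m) = 0 := by
      rw [ZMod.natCast_eq_zero_iff]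
      intro h
      have := Nat.le_of_dvd (by norm_num) h
      omega
    simpa using this
  -- a blank edge cannot have heads on both sides
  have both : ∀ i, blank (c i) → c (i + 1) ∈ heads (c i) → c (i - 1) ∈ heads (c i) → False := by
    intro i hb hr hl
    rcases hside i hb with h | h
    · have := h _ hl
      exact h2 (by linear_combination -this)
    · have := h _ hr
      exact h2 (by linear_combination this)
  -- localization: if c i is a head of a blank edge c j, then j = i - 1 or j = i + 1
  have loc : ∀ i j, blank (c j) → c i ∈ heads (c j) → j = i - 1 ∨ j = i + 1 := by
    intro i j hb hmem
    rcases hside j hb with h | h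
    · left; have := h _ hmem; linear_combination -this
    · right; have := h _ hmem; linear_combination -this
  have charged' : ∀ i, ¬ blank (c i) → ∃ j, blank (c j) ∧ c i ∈ heads (c j) :=
    fun i h => (hcharged i).resolve_left h
  -- left-pointing blanks propagate forward by 2
  have L : ∀ i, blank (c i) → c (i - 1) ∈ heads (c i) →
      blank (c (i + 2)) ∧ c (i + 1) ∈ heads (c (i + 2)) := by
    intro i hb hl
    have hnb := hnonadj i hb
    obtain ⟨j, hbj, hmem⟩ := charged' _ hnb
    rcases loc (i + 1) j hbj hmem with hj | hj
    · have hj' : j = i := by rw [hj]; ring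
      subst hj'
      exact absurd (both j hbj hmem hl) (fun h => h)
    · have hj' : j = i + 2 := by rw [hj]; ring
      subst hj'
      exact ⟨hbj, hmem⟩
  -- iterated propagation
  have Lt : ∀ i, blank (c i) → c (i - 1) ∈ heads (c i) → ∀ t : ℕ,
      blank (c (i + 2 * (t : ZMod m))) ∧
        c (i + 2 * (t : ZMod m) - 1) ∈ heads (c (i + 2 * (t : ZMod m))) := by
    intro i hb hl t
    induction t with
    | zero => simpa using ⟨hb, hl⟩
    | succ n ih =>
      obtain ⟨hb', hl'⟩ := ih
      obtain ⟨hb2, hl2⟩ := L _ hb' hl'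
      have e1 : i + 2 * ((n + 1 : ℕ) : ZMod m) = (i + 2 * (n : ZMod m)) + 2 := by
        push_cast; ring
      have e2 : i + 2 * ((n + 1 : ℕ) : ZMod m) - 1 = (i + 2 * (n : ZMod m)) + 1 := by
        push_cast; ring
      rw [e2, e1]
      exact ⟨hb2, hl2⟩
  -- one left-pointing blank forces all blanks to be left-pointing
  have allL : (∃ i, blank (c i) ∧ c (i - 1) ∈ heads (c i)) →
      ∀ j, blank (c j) → c (j - 1) ∈ heads (c j) ∧ blank (c (j + 2)) := by
    rintro ⟨i, hb, hl⟩ j hbj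
    have hd : (((j - i).val : ℕ) : ZMod m) = j - i := ZMod.natCast_rightInverse (j - i)
    rcases Nat.even_or_odd (j - i).val with ⟨t, ht⟩ | ⟨t, ht⟩
    · -- j = i + 2t
      have hji : i + 2 * (t : ZMod m) = j := by
        have h' := hd
        rw [ht] at h'
        push_cast at h'
        linear_combination h'
      have h1 := (Lt i hb hl t).2
      have h2' := (Lt i hb hl (t + 1)).1
      rw [hji] at h1
      have hji2 : i + 2 * ((t + 1 : ℕ) : ZMod m) = j + 2 := by
        push_cast
        linear_combination hji
      rw [hji2] at h2'
      exact ⟨h1, h2'⟩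
    · -- j = i + 2t + 1 : then c (j-1) is blank too, contradiction
      exfalso
      have hji : i + 2 * (t : ZMod m) = j - 1 := by
        have h' := hd
        rw [ht] at h'
        push_cast at h'
        linear_combination h'
      have h1 := (Lt i hb hl t).1
      rw [hji] at h1
      have := hnonadj (j - 1) h1
      rw [sub_add_cancel] at this
      exact this hbj
  -- every blank edge is left- or right-pointing
  have B : ∀ i, blank (c i) → c (i + 1) ∈ heads (c i) ∨ c (i - 1) ∈ heads (c i) := by
    intro i hb
    have hnb := hnonadj i hb
    obtain ⟨j, hbj, hmem⟩ := charged' _ hnb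
    rcases loc (i + 1) j hbj hmem with hj | hj
    · have hj' : j = i := by rw [hj]; ring
      subst hj'
      exact Or.inl hmem
    · have hj' : j = i + 2 := by rw [hj]; ring
      subst hj'
      -- c (i+2) is a left-pointing blank
      have hl : c ((i + 2) - 1) ∈ heads (c (i + 2)) := by
        have e : (i + 2) - 1 = i + 1 := by ring
        rw [e]; exact hmem
      exact Or.inr (allL ⟨i + 2, hbj, hl⟩ i hb).1
  by_cases hex : ∃ i, blank (c i) ∧ c (i - 1) ∈ heads (c i)
  · exact ⟨Or.inr fun i hb => (allL hex i hb).1, fun i hb => (allL hex i hb).2⟩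
  · have right : ∀ i, blank (c i) → c (i + 1) ∈ heads (c i) := by
      intro i hb
      exact (B i hb).resolve_right fun h => hex ⟨i, hb, h⟩
    refine ⟨Or.inl right, fun i hb => ?_⟩
    by_contra hnb
    obtain ⟨j, hbj, hmem⟩ := charged' (i + 2) hnb
    rcases loc (i + 2) j hbj hmem with hj | hj
    · have hj' : j = i + 1 := by rw [hj]; ring
      subst hj'
      exact hnonadj i hb hbj
    · -- j = i + 3 is a left-pointing blank, contradiction
      apply hex
      refine ⟨j, hbj, ?_⟩
      have e : j - 1 = i + 2 := by rw [hj]; ring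
      rw [e]; exact hmem
end
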